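/- A real (k,k)-form u on a complex vector space is non-negative (i.e., u ∧ (√-1)^{(n-k)²} β ∧ β̄ is a non-negative volume form for all (n-k,0)-forms β) if and only if u can be written as u = Σ_{s=1}^N (√-1)^{k²} α_s ∧ ᾱ_s for some (k,0)-forms α_1,…,α_N. -/

import Mathlib

open Complex Finset

/-- Coefficient model for `(p,q)`-forms on `ℂⁿ`: the value `a I J` is the coefficient of
`dz^{I 0} ∧ ⋯ ∧ dz^{I (p-1)} ∧ dz̄^{J 0} ∧ ⋯ ∧ dz̄^{J (q-1)}`, the form being the sum of these
over all index tuples. -/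
abbrev PQForm (n p q : ℕ) : Type := (Fin p → Fin n) → (Fin q → Fin n) → ℂ

namespace PQForm

variable {n p q p' q' k : ℕ}

/-- Wedge product of forms, on coefficients. -/
def wedge (a : PQForm n p q) (b : PQForm n p' q') : PQForm n (p + p') (q + q') :=
  fun I J => (-1 : ℂ) ^ (q * p') *
    (a (fun i => I (Fin.castAdd p' i)) (fun j => J (Fin.castAdd q' j)) *
     b (fun i => I (Fin.natAdd p i)) (fun j => J (Fin.natAdd q j)))

/-- Complex conjugate of a `(p,q)`-form, a `(q,p)`-form. -/
def conjForm (a : PQForm n p q) : PQForm n q p :=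
  fun J I => (-1 : ℂ) ^ (p * q) * (starRingEnd ℂ) (a I J)

/-- Reinterpret a form along equalities of the degrees. -/
def castD (h1 : p = p') (h2 : q = q') (a : PQForm n p q) : PQForm n p' q' :=
  fun I J => a (fun i => I (Fin.cast h1 i)) (fun j => J (Fin.cast h2 j))

/-- (Unnormalized) antisymmetrization of the coefficients; two coefficient arrays represent
the same differential form iff their antisymmetrizations agree. -/
noncomputable def alt (a : PQForm n p q) : PQForm n p q :=
  fun I J => ∑ σ : Equiv.Perm (Fin p), ∑ τ : Equiv.Perm (Fin q),
    (((Equiv.Perm.sign σ : ℤ) * (Equiv.Perm.sign τ : ℤ) : ℤ) : ℂ) * a (I ∘ σ) (J ∘ τ)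

/-- A real `(p,p)`-form: it equals its own conjugate (as a form). -/
def IsRealForm (a : PQForm n p p) : Prop := alt (conjForm a) = alt a

/-- The total coefficient of an `(n,n)`-form with respect to `dz^1∧⋯∧dz^n∧dz̄^1∧⋯∧dz̄^n`. -/
noncomputable def volCoeff (a : PQForm n n n) : ℂ := alt a id id

/-- A positive volume form `τ·(√-1 dz^1∧dz̄^1)∧⋯∧(√-1 dz^n∧dz̄^n)`, `τ > 0`; equivalently its
coefficient w.r.t. `dz^{1..n}∧dz̄^{1..n}` is `τ·(√-1)^{n²}` with `τ > 0`. -/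
def IsPosVol (a : PQForm n n n) : Prop :=
  ∃ t : ℝ, 0 < t ∧ volCoeff a = (t : ℂ) * Complex.I ^ (n ^ 2)

/-- A non-negative volume form. -/
def IsNonnegVol (a : PQForm n n n) : Prop :=
  ∃ t : ℝ, 0 ≤ t ∧ volCoeff a = (t : ℂ) * Complex.I ^ (n ^ 2)

/-- The `(n,n)`-form `u ∧ (√-1)^{(n-k)²} β ∧ β̄`, for `u` a `(k,k)`-form and `β` an
`(n-k,0)`-form. -/
def pairing (h : k ≤ n) (u : PQForm n k k) (β : PQForm n (n - k) 0) : PQForm n n n :=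
  castD (by omega) (by omega)
    ((Complex.I ^ ((n - k) ^ 2)) • ((u.wedge β).wedge (conjForm β)))

/-- A `(k,k)`-form is non-negative if pairing with every `(n-k,0)`-form yields a
non-negative volume form. -/
def IsNonnegForm (h : k ≤ n) (u : PQForm n k k) : Prop :=
  ∀ β : PQForm n (n - k) 0, IsNonnegVol (pairing h u β)

/-- A `(k,k)`-form is positive if pairing with every non-zero `(n-k,0)`-form yields a
positive volume form. -/
def IsPosForm (h : k ≤ n) (u : PQForm n k k) : Prop :=
  ∀ β : PQForm n (n - k) 0, alt β ≠ 0 → IsPosVol (pairing h u β)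

/-- A decomposable `(p,0)`-form `β = β₁ ∧ ⋯ ∧ β_p` with each `β_i` a `(1,0)`-form. -/
def IsDecomposable (β : PQForm n p 0) : Prop :=
  ∃ b : Fin p → (Fin n → ℂ), β = fun I _ => ∏ j, b j (I j)

/-- Weak non-negativity: pairing with decomposable forms is a non-negative volume form. -/
def IsWeaklyNonnegForm (h : k ≤ n) (u : PQForm n k k) : Prop :=
  ∀ β : PQForm n (n - k) 0, IsDecomposable β → IsNonnegVol (pairing h u β)

/-- Weak positivity: pairing with non-zero decomposable forms is a positive volume form. -/
def IsWeaklyPosForm (h : k ≤ n) (u : PQForm n k k) : Prop :=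
  ∀ β : PQForm n (n - k) 0, IsDecomposable β → alt β ≠ 0 → IsPosVol (pairing h u β)

/-- Strong non-negativity: `u = ∑_s (√-1)^{p²} α_s ∧ ᾱ_s` (as forms) with each `α_s`
a decomposable `(p,0)`-form. -/
def IsStronglyNonnegForm (u : PQForm n p p) : Prop :=
  ∃ (N : ℕ) (α : Fin N → PQForm n p 0), (∀ s, IsDecomposable (α s)) ∧
    alt u = alt (∑ s, castD (Nat.add_zero p) (Nat.zero_add p)
      ((Complex.I ^ (p ^ 2)) • ((α s).wedge (conjForm (α s)))))

end PQForm

namespace SoS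
open Equiv Function

variable {n k m : ℕ}

noncomputable def sgn {N : ℕ} (σ : Equiv.Perm (Fin N)) : ℂ := ((Equiv.Perm.sign σ : ℤ) : ℂ)

lemma sgn_mul {N : ℕ} (σ τ : Equiv.Perm (Fin N)) : sgn (σ * τ) = sgn σ * sgn τ := by
  simp [sgn, map_mul]

lemma sgn_sq {N : ℕ} (σ : Equiv.Perm (Fin N)) : sgn σ * sgn σ = 1 := by
  rcases Int.units_eq_one_or (Equiv.Perm.sign σ) with h | h <;> simp [sgn, h]

lemma conj_sgn {N : ℕ} (σ : Equiv.Perm (Fin N)) : (starRingEnd ℂ) (sgn σ) = sgn σ := by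
  simp [sgn]

/-- The block equivalence. -/
def E (hk : k + m = n) : (Fin k ⊕ Fin m) ≃ Fin n := finSumFinEquiv.trans (finCongr hk)

def lIdx (hk : k + m = n) : Fin k → Fin n := fun i => E hk (Sum.inl i)
def rIdx (hk : k + m = n) : Fin m → Fin n := fun j => E hk (Sum.inr j)

lemma lIdx_injective (hk : k + m = n) : Injective (lIdx hk) :=
  fun a b hab => Sum.inl_injective ((E hk).injective hab)

lemma rIdx_injective (hk : k + m = n) : Injective (rIdx hk) :=
  fun a b hab => Sum.inr_injective ((E hk).injective hab)

lemma lIdx_ne_rIdx (hk : k + m = n) (i : Fin k) (j : Fin m) : lIdx hk i ≠ rIdx hk j := by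
  intro hij
  simpa using (E hk).injective hij

lemma lIdx_val (hk : k + m = n) (i : Fin k) : (lIdx hk i : ℕ) = (i : ℕ) := by
  simp [lIdx, E]

lemma rIdx_val (hk : k + m = n) (j : Fin m) : (rIdx hk j : ℕ) = k + (j : ℕ) := by
  simp [rIdx, E]

/-- Block permutation. -/
def blk (hk : k + m = n) (π : Equiv.Perm (Fin k)) (ρ : Equiv.Perm (Fin m)) :
    Equiv.Perm (Fin n) := (E hk).permCongr (Equiv.sumCongr π ρ)

lemma blk_lIdx (hk : k + m = n) (π : Equiv.Perm (Fin k)) (ρ : Equiv.Perm (Fin m)) (i : Fin k) :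
    blk hk π ρ (lIdx hk i) = lIdx hk (π i) := by
  simp [blk, lIdx, Equiv.permCongr_apply]

lemma blk_rIdx (hk : k + m = n) (π : Equiv.Perm (Fin k)) (ρ : Equiv.Perm (Fin m)) (j : Fin m) :
    blk hk π ρ (rIdx hk j) = rIdx hk (ρ j) := by
  simp [blk, rIdx, Equiv.permCongr_apply]

lemma sgn_blk (hk : k + m = n) (π : Equiv.Perm (Fin k)) (ρ : Equiv.Perm (Fin m)) :
    sgn (blk hk π ρ) = sgn π * sgn ρ := by
  simp [sgn, blk, Equiv.Perm.sign_permCongr, Equiv.Perm.sign_sumCongr]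

lemma blk_inj_left (hk : k + m = n) {π π' : Equiv.Perm (Fin k)} 
    (h : blk hk π 1 = blk hk π' 1) : π = π' := by
  ext i
  have := congrArg (fun σ : Equiv.Perm (Fin n) => σ (lIdx hk i)) h
  simp only [blk_lIdx] at this
  exact congrArg Fin.val (lIdx_injective hk this)

lemma blk_inj_right (hk : k + m = n) {ρ ρ' : Equiv.Perm (Fin m)} 
    (h : blk hk 1 ρ = blk hk 1 ρ') : ρ = ρ' := by
  ext j
  have := congrArg (fun σ : Equiv.Perm (Fin n) => σ (rIdx hk j)) h
  simp only [blk_rIdx] at this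
  exact congrArg Fin.val (rIdx_injective hk this)

/-- If a permutation fixes the right block pointwise, it is a left-block permutation. -/
lemma eq_blk_of_fix_r (hk : k + m = n) (σ : Equiv.Perm (Fin n))
    (hσ : ∀ j, σ (rIdx hk j) = rIdx hk j) : ∃ π, σ = blk hk π 1 := by
  have hni : ∀ i : Fin k, ∀ j : Fin m, σ (lIdx hk i) ≠ rIdx hk j := by
    intro i j hij
    rw [← hσ j] at hij
    exact lIdx_ne_rIdx hk i j (σ.injective hij)
  have hf : ∀ i : Fin k, ∃ i', σ (lIdx hk i) = lIdx hk i' := by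
    intro i
    rcases hs : (E hk).symm (σ (lIdx hk i)) with i' | j'
    · exact ⟨i', by rw [← (E hk).apply_symm_apply (σ (lIdx hk i)), hs]; rfl⟩
    · exact absurd (by rw [← (E hk).apply_symm_apply (σ (lIdx hk i)), hs]; rfl)
        (hni i j')
  choose f hfs using hf
  have hfinj : Injective f := by
    intro a b hab
    exact lIdx_injective hk (σ.injective (by rw [hfs a, hfs b, hab]))
  have hfbij : Bijective f := (Finite.injective_iff_bijective).mp hfinj
  refine ⟨Equiv.ofBijective f hfbij, ?_⟩
  ext x
  rcases hs : (E hk).symm x with i | j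
  · have hx : x = lIdx hk i := by rw [← (E hk).apply_symm_apply x, hs]; rfl
    rw [hx, hfs i, blk_lIdx]; rfl
  · have hx : x = rIdx hk j := by rw [← (E hk).apply_symm_apply x, hs]; rfl
    rw [hx, hσ j, blk_rIdx]; rfl

lemma eq_blk_of_fix_l (hk : k + m = n) (σ : Equiv.Perm (Fin n))
    (hσ : ∀ i, σ (lIdx hk i) = lIdx hk i) : ∃ ρ, σ = blk hk 1 ρ := by
  have hni : ∀ j : Fin m, ∀ i : Fin k, σ (rIdx hk j) ≠ lIdx hk i := by
    intro j i hij
    rw [← hσ i] at hij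
    exact lIdx_ne_rIdx hk i j (σ.injective hij).symm
  have hf : ∀ j : Fin m, ∃ j', σ (rIdx hk j) = rIdx hk j' := by
    intro j
    rcases hs : (E hk).symm (σ (rIdx hk j)) with i' | j'
    · exact absurd (by rw [← (E hk).apply_symm_apply (σ (rIdx hk j)), hs]; rfl)
        (hni j i')
    · exact ⟨j', by rw [← (E hk).apply_symm_apply (σ (rIdx hk j)), hs]; rfl⟩
  choose f hfs using hf
  have hfinj : Injective f := by
    intro a b hab
    exact rIdx_injective hk (σ.injective (by rw [hfs a, hfs b, hab]))
  have hfbij : Bijective f := (Finite.injective_iff_bijective).mp hfinj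
  refine ⟨Equiv.ofBijective f hfbij, ?_⟩
  ext x
  rcases hs : (E hk).symm x with i | j
  · have hx : x = lIdx hk i := by rw [← (E hk).apply_symm_apply x, hs]; rfl
    rw [hx, hσ i, blk_lIdx]; rfl
  · have hx : x = rIdx hk j := by rw [← (E hk).apply_symm_apply x, hs]; rfl
    rw [hx, hfs j, blk_rIdx]; rfl

/-- Any two injections `Fin m → Fin n` differ by a permutation. -/
lemma exists_perm_comp {α β : Type*} [Fintype α] [Fintype β] [DecidableEq β]
    {f g : α → β} (hf : Injective f) (hg : Injective g) :
    ∃ σ : Equiv.Perm β, σ ∘ f = g := by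
  classical
  have hcard : Fintype.card ↥(Set.range f)ᶜ = Fintype.card ↥(Set.range g)ᶜ := by
    rw [Fintype.card_compl_set, Fintype.card_compl_set,
      Set.card_range_of_injective hf, Set.card_range_of_injective hg]
  refine ⟨(Equiv.Set.sumCompl (Set.range f)).symm.trans
    ((Equiv.sumCongr ((Equiv.ofInjective f hf).symm.trans (Equiv.ofInjective g hg))
      (Fintype.equivOfCardEq hcard)).trans (Equiv.Set.sumCompl (Set.range g))), ?_⟩
  funext a
  simp only [comp_apply, Equiv.trans_apply]
  rw [Equiv.Set.sumCompl_symm_apply_of_mem (Set.mem_range_self a)]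
  simp


open PQForm

noncomputable def ind {α : Type*} [DecidableEq α] (a : α) : α → ℂ := fun x => if x = a then 1 else 0

/-- The central sesquilinear pairing: coefficient of `u ∧ β ∧ γ̄` expanded over permutations. -/
noncomputable def Sfun (hk : k + m = n) (u : PQForm n k k) (w v : (Fin m → Fin n) → ℂ) : ℂ :=
  ∑ σ : Equiv.Perm (Fin n), ∑ τ : Equiv.Perm (Fin n),
    sgn σ * sgn τ * u (⇑σ ∘ lIdx hk) (⇑τ ∘ lIdx hk) * w (⇑σ ∘ rIdx hk) *
      (starRingEnd ℂ) (v (⇑τ ∘ rIdx hk))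

noncomputable def Mfun (hk : k + m = n) (c : (Fin k → Fin n) → ℂ) (w : (Fin m → Fin n) → ℂ) : ℂ :=
  ∑ σ : Equiv.Perm (Fin n), sgn σ * c (⇑σ ∘ lIdx hk) * w (⇑σ ∘ rIdx hk)

noncomputable def altW (w : (Fin m → Fin n) → ℂ) : (Fin m → Fin n) → ℂ :=
  fun J => ∑ ρ : Equiv.Perm (Fin m), sgn ρ * w (J ∘ ⇑ρ)

lemma sum4_comm {A B C D : Type*} [Fintype A] [Fintype B] [Fintype C] [Fintype D]
    (t : A → B → C → D → ℂ) :
    ∑ a, ∑ b, ∑ c, ∑ d, t a b c d = ∑ c, ∑ d, ∑ a, ∑ b, t a b c d := by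
  have h1 : ∑ a, ∑ b, ∑ c, ∑ d, t a b c d = ∑ a, ∑ c, ∑ b, ∑ d, t a b c d :=
    Finset.sum_congr rfl fun a _ => Finset.sum_comm
  have h2 : ∑ a, ∑ c, ∑ b, ∑ d, t a b c d = ∑ c, ∑ a, ∑ b, ∑ d, t a b c d :=
    Finset.sum_comm
  have h3 : ∑ c, ∑ a, ∑ b, ∑ d, t a b c d = ∑ c, ∑ a, ∑ d, ∑ b, t a b c d :=
    Finset.sum_congr rfl fun c _ => Finset.sum_congr rfl fun a _ => Finset.sum_comm
  have h4 : ∑ c, ∑ a, ∑ d, ∑ b, t a b c d = ∑ c, ∑ d, ∑ a, ∑ b, t a b c d :=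
    Finset.sum_congr rfl fun c _ => Finset.sum_comm
  rw [h1, h2, h3, h4]

lemma mul_blk_comp_l (hk : k + m = n) (σ : Equiv.Perm (Fin n)) (π : Equiv.Perm (Fin k))
    (ρ : Equiv.Perm (Fin m)) : ⇑(σ * blk hk π ρ) ∘ lIdx hk = ⇑σ ∘ lIdx hk ∘ ⇑π :=
  funext fun i => by simp [Equiv.Perm.mul_apply, blk_lIdx]

lemma mul_blk_comp_r (hk : k + m = n) (σ : Equiv.Perm (Fin n)) (π : Equiv.Perm (Fin k))
    (ρ : Equiv.Perm (Fin m)) : ⇑(σ * blk hk π ρ) ∘ rIdx hk = ⇑σ ∘ rIdx hk ∘ ⇑ρ :=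
  funext fun j => by simp [Equiv.Perm.mul_apply, blk_rIdx]

lemma sgn_one {N : ℕ} : sgn (1 : Equiv.Perm (Fin N)) = 1 := by simp [sgn]

lemma comp_one_right {α : Type*} (f : Fin m → α) : f ∘ ⇑(1 : Equiv.Perm (Fin m)) = f := rfl

/-- Antisymmetrization in the `u`-slots. -/
lemma sfun_alt_u (hk : k + m = n) (u : PQForm n k k) (w v : (Fin m → Fin n) → ℂ) :
    ∑ σ : Equiv.Perm (Fin n), ∑ τ : Equiv.Perm (Fin n),
      sgn σ * sgn τ * alt u (⇑σ ∘ lIdx hk) (⇑τ ∘ lIdx hk) * w (⇑σ ∘ rIdx hk) *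
        (starRingEnd ℂ) (v (⇑τ ∘ rIdx hk))
      = ((k.factorial : ℂ))^2 * Sfun hk u w v := by
  have step1 : ∀ σ τ : Equiv.Perm (Fin n),
      sgn σ * sgn τ * alt u (⇑σ ∘ lIdx hk) (⇑τ ∘ lIdx hk) * w (⇑σ ∘ rIdx hk) *
        (starRingEnd ℂ) (v (⇑τ ∘ rIdx hk))
      = ∑ π : Equiv.Perm (Fin k), ∑ π' : Equiv.Perm (Fin k),
          sgn σ * sgn τ * sgn π * sgn π' *
            u ((⇑σ ∘ lIdx hk) ∘ ⇑π) ((⇑τ ∘ lIdx hk) ∘ ⇑π') * w (⇑σ ∘ rIdx hk) *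
            (starRingEnd ℂ) (v (⇑τ ∘ rIdx hk)) := by
    intro σ τ
    simp only [alt, Finset.mul_sum, Finset.sum_mul]
    refine Finset.sum_congr rfl fun π _ => Finset.sum_congr rfl fun π' _ => ?_
    push_cast [sgn]
    ring
  calc
    _ = ∑ σ : Equiv.Perm (Fin n), ∑ τ : Equiv.Perm (Fin n),
          ∑ π : Equiv.Perm (Fin k), ∑ π' : Equiv.Perm (Fin k),
          sgn σ * sgn τ * sgn π * sgn π' *
            u ((⇑σ ∘ lIdx hk) ∘ ⇑π) ((⇑τ ∘ lIdx hk) ∘ ⇑π') * w (⇑σ ∘ rIdx hk) *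
            (starRingEnd ℂ) (v (⇑τ ∘ rIdx hk)) :=
      Finset.sum_congr rfl fun σ _ => Finset.sum_congr rfl fun τ _ => step1 σ τ
    _ = ∑ π : Equiv.Perm (Fin k), ∑ π' : Equiv.Perm (Fin k),
          ∑ σ : Equiv.Perm (Fin n), ∑ τ : Equiv.Perm (Fin n),
          sgn σ * sgn τ * sgn π * sgn π' *
            u ((⇑σ ∘ lIdx hk) ∘ ⇑π) ((⇑τ ∘ lIdx hk) ∘ ⇑π') * w (⇑σ ∘ rIdx hk) *
            (starRingEnd ℂ) (v (⇑τ ∘ rIdx hk)) := sum4_comm _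
    _ = ∑ π : Equiv.Perm (Fin k), ∑ π' : Equiv.Perm (Fin k), Sfun hk u w v := by
      refine Finset.sum_congr rfl fun π _ => Finset.sum_congr rfl fun π' _ => ?_
      refine Fintype.sum_equiv (Equiv.mulRight (blk hk π 1)) _ _ fun σ => ?_
      refine Fintype.sum_equiv (Equiv.mulRight (blk hk π' 1)) _ _ fun τ => ?_
      simp only [Equiv.coe_mulRight, mul_blk_comp_l, mul_blk_comp_r, comp_one_right,
        sgn_mul, sgn_blk, sgn_one]
      have e1 : (⇑σ ∘ lIdx hk) ∘ ⇑π = ⇑σ ∘ lIdx hk ∘ ⇑π := rfl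
      have e2 : (⇑τ ∘ lIdx hk) ∘ ⇑π' = ⇑τ ∘ lIdx hk ∘ ⇑π' := rfl
      rw [e1, e2]
      ring
    _ = ((k.factorial : ℂ))^2 * Sfun hk u w v := by
      simp [Finset.sum_const, Fintype.card_perm, mul_comm]
      ring

lemma Sfun_eq_of_alt_eq (hk : k + m = n) {u u' : PQForm n k k} (hu : alt u = alt u')
    (w v : (Fin m → Fin n) → ℂ) : Sfun hk u w v = Sfun hk u' w v := by
  have hfac : ((k.factorial : ℂ))^2 ≠ 0 :=
    pow_ne_zero _ (Nat.cast_ne_zero.mpr k.factorial_ne_zero)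
  apply mul_left_cancel₀ hfac
  rw [← sfun_alt_u, ← sfun_alt_u, hu]

/-- Antisymmetrization in the `w`-slot. -/
lemma sfun_altW (hk : k + m = n) (u : PQForm n k k) (w v : (Fin m → Fin n) → ℂ) :
    ∑ σ : Equiv.Perm (Fin n), ∑ τ : Equiv.Perm (Fin n),
      sgn σ * sgn τ * u (⇑σ ∘ lIdx hk) (⇑τ ∘ lIdx hk) * altW w (⇑σ ∘ rIdx hk) *
        (starRingEnd ℂ) (v (⇑τ ∘ rIdx hk))
      = (m.factorial : ℂ) * Sfun hk u w v := by
  have step1 : ∀ σ τ : Equiv.Perm (Fin n),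
      sgn σ * sgn τ * u (⇑σ ∘ lIdx hk) (⇑τ ∘ lIdx hk) * altW w (⇑σ ∘ rIdx hk) *
        (starRingEnd ℂ) (v (⇑τ ∘ rIdx hk))
      = ∑ ρ : Equiv.Perm (Fin m),
          sgn σ * sgn τ * sgn ρ * u (⇑σ ∘ lIdx hk) (⇑τ ∘ lIdx hk) * w ((⇑σ ∘ rIdx hk) ∘ ⇑ρ) *
            (starRingEnd ℂ) (v (⇑τ ∘ rIdx hk)) := by
    intro σ τ
    simp only [altW, Finset.mul_sum, Finset.sum_mul]
    refine Finset.sum_congr rfl fun ρ _ => ?_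
    ring
  calc
    _ = ∑ σ : Equiv.Perm (Fin n), ∑ τ : Equiv.Perm (Fin n), ∑ ρ : Equiv.Perm (Fin m),
          sgn σ * sgn τ * sgn ρ * u (⇑σ ∘ lIdx hk) (⇑τ ∘ lIdx hk) * w ((⇑σ ∘ rIdx hk) ∘ ⇑ρ) *
            (starRingEnd ℂ) (v (⇑τ ∘ rIdx hk)) :=
      Finset.sum_congr rfl fun σ _ => Finset.sum_congr rfl fun τ _ => step1 σ τ
    _ = ∑ ρ : Equiv.Perm (Fin m), ∑ σ : Equiv.Perm (Fin n), ∑ τ : Equiv.Perm (Fin n),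
          sgn σ * sgn τ * sgn ρ * u (⇑σ ∘ lIdx hk) (⇑τ ∘ lIdx hk) * w ((⇑σ ∘ rIdx hk) ∘ ⇑ρ) *
            (starRingEnd ℂ) (v (⇑τ ∘ rIdx hk)) := by
      exact (Finset.sum_congr rfl fun σ _ => Finset.sum_comm).trans Finset.sum_comm
    _ = ∑ ρ : Equiv.Perm (Fin m), Sfun hk u w v := by
      refine Finset.sum_congr rfl fun ρ _ => ?_
      refine Fintype.sum_equiv (Equiv.mulRight (blk hk 1 ρ)) _ _ fun σ => ?_
      refine Finset.sum_congr rfl fun τ _ => ?_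
      simp only [Equiv.coe_mulRight, mul_blk_comp_l, mul_blk_comp_r, sgn_mul, sgn_blk, sgn_one]
      have e1 : ⇑σ ∘ lIdx hk ∘ ⇑(1 : Equiv.Perm (Fin k)) = ⇑σ ∘ lIdx hk := rfl
      have e2 : (⇑σ ∘ rIdx hk) ∘ ⇑ρ = ⇑σ ∘ rIdx hk ∘ ⇑ρ := rfl
      rw [e1, e2]
      ring
    _ = (m.factorial : ℂ) * Sfun hk u w v := by
      simp [Finset.sum_const, Fintype.card_perm]

/-- Stabilizer sum over the right block. -/
lemma sum_stab_r (hk : k + m = n) (σ₀ : Equiv.Perm (Fin n)) (G : Equiv.Perm (Fin n) → ℂ) :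
    ∑ σ : Equiv.Perm (Fin n), (if ⇑σ ∘ rIdx hk = ⇑σ₀ ∘ rIdx hk then G σ else 0)
      = ∑ π : Equiv.Perm (Fin k), G (σ₀ * blk hk π 1) := by
  classical
  rw [← Finset.sum_filter]
  refine (Finset.sum_bij (fun (π : Equiv.Perm (Fin k)) (_ : π ∈ Finset.univ) => σ₀ * blk hk π 1)
    ?_ ?_ ?_ ?_).symm
  · intro π _
    simp only [Finset.mem_filter, Finset.mem_univ, true_and]
    rw [mul_blk_comp_r]
    rfl
  · intro π₁ _ π₂ _ hi
    exact blk_inj_left hk (mul_left_cancel hi)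
  · intro σ hσ
    simp only [Finset.mem_filter, Finset.mem_univ, true_and] at hσ
    have hfix : ∀ j, (σ₀⁻¹ * σ) (rIdx hk j) = rIdx hk j := by
      intro j
      have := congrFun hσ j
      simp only [comp_apply] at this
      simp [Equiv.Perm.mul_apply, this]
    obtain ⟨π, hπ⟩ := eq_blk_of_fix_r hk _ hfix
    refine ⟨π, Finset.mem_univ _, ?_⟩
    show σ₀ * blk hk π 1 = σ
    rw [← hπ]; group
  · intro π _
    rfl

/-- Stabilizer sum over the left block. -/
lemma sum_stab_l (hk : k + m = n) (σ₀ : Equiv.Perm (Fin n)) (G : Equiv.Perm (Fin n) → ℂ) :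
    ∑ σ : Equiv.Perm (Fin n), (if ⇑σ ∘ lIdx hk = ⇑σ₀ ∘ lIdx hk then G σ else 0)
      = ∑ ρ : Equiv.Perm (Fin m), G (σ₀ * blk hk 1 ρ) := by
  classical
  rw [← Finset.sum_filter]
  refine (Finset.sum_bij (fun (ρ : Equiv.Perm (Fin m)) (_ : ρ ∈ Finset.univ) => σ₀ * blk hk 1 ρ)
    ?_ ?_ ?_ ?_).symm
  · intro ρ _
    simp only [Finset.mem_filter, Finset.mem_univ, true_and]
    rw [mul_blk_comp_l]
    rfl
  · intro ρ₁ _ ρ₂ _ hi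
    exact blk_inj_right hk (mul_left_cancel hi)
  · intro σ hσ
    simp only [Finset.mem_filter, Finset.mem_univ, true_and] at hσ
    have hfix : ∀ i, (σ₀⁻¹ * σ) (lIdx hk i) = lIdx hk i := by
      intro i
      have := congrFun hσ i
      simp only [comp_apply] at this
      simp [Equiv.Perm.mul_apply, this]
    obtain ⟨ρ, hρ⟩ := eq_blk_of_fix_l hk _ hfix
    refine ⟨ρ, Finset.mem_univ _, ?_⟩
    show σ₀ * blk hk 1 ρ = σ
    rw [← hρ]; group
  · intro ρ _
    rfl

/-- Pairing an indicator against `Mfun`. -/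
lemma Mfun_ind (hk : k + m = n) (σ₀ : Equiv.Perm (Fin n)) (w : (Fin m → Fin n) → ℂ) :
    Mfun hk (ind (⇑σ₀ ∘ lIdx hk)) w = sgn σ₀ * altW w (⇑σ₀ ∘ rIdx hk) := by
  classical
  have : Mfun hk (ind (⇑σ₀ ∘ lIdx hk)) w
      = ∑ σ : Equiv.Perm (Fin n),
          (if ⇑σ ∘ lIdx hk = ⇑σ₀ ∘ lIdx hk then sgn σ * w (⇑σ ∘ rIdx hk) else 0) := by
    refine Finset.sum_congr rfl fun σ _ => ?_
    simp only [ind]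
    split_ifs <;> ring
  rw [this, sum_stab_l hk σ₀]
  rw [altW, Finset.mul_sum]
  refine Finset.sum_congr rfl fun ρ _ => ?_
  rw [mul_blk_comp_r, sgn_mul, sgn_blk, sgn_one]
  have e2 : (⇑σ₀ ∘ rIdx hk) ∘ ⇑ρ = ⇑σ₀ ∘ rIdx hk ∘ ⇑ρ := rfl
  rw [e2]
  ring

/-- Signed sums over permutations vanish when the index tuple has a repeat. -/
lemma sum_sgn_vanish {M : ℕ} {J : Fin M → Fin n} (hJ : ¬Function.Injective J)
    (F : (Fin M → Fin n) → ℂ) :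
    ∑ ρ : Equiv.Perm (Fin M), sgn ρ * F (J ∘ ⇑ρ) = 0 := by
  classical
  simp only [Function.Injective, not_forall] at hJ
  obtain ⟨a, b, hab, hne⟩ := hJ
  have hswap : J ∘ ⇑(Equiv.swap a b) = J := by
    funext x
    simp only [Function.comp_apply]
    by_cases hx : x = a
    · simp [hx, Equiv.swap_apply_left, hab.symm]
    · by_cases hx' : x = b
      · simp [hx', Equiv.swap_apply_right, hab]
      · simp [Equiv.swap_apply_of_ne_of_ne hx hx']
  refine Finset.sum_involution (fun ρ _ => Equiv.swap a b * ρ) ?_ ?_ ?_ ?_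
  · intro ρ _
    show sgn ρ * F (J ∘ ⇑ρ) + sgn (Equiv.swap a b * ρ) * F (J ∘ ⇑(Equiv.swap a b * ρ)) = 0
    have h1 : J ∘ ⇑(Equiv.swap a b * ρ) = J ∘ ⇑ρ := by
      rw [Equiv.Perm.coe_mul, ← Function.comp_assoc, hswap]
    have h2 : sgn (Equiv.swap a b) = -1 := by
      simp [sgn, Equiv.Perm.sign_swap hne]
    rw [h1, sgn_mul, h2]
    ring
  · intro ρ _ _ hcon
    have hcon' : Equiv.swap a b * ρ = ρ := hcon
    have h1 : Equiv.swap a b = 1 := mul_right_cancel (by rw [hcon', one_mul])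
    have h2 := congrArg (fun e : Equiv.Perm (Fin M) => e a) h1
    simp [Equiv.swap_apply_left] at h2
    exact hne h2.symm
  · intro ρ _
    exact Finset.mem_univ _
  · intro ρ _
    show Equiv.swap a b * (Equiv.swap a b * ρ) = ρ
    rw [← mul_assoc, Equiv.swap_mul_self, one_mul]

lemma alt_not_inj_left (u : PQForm n k k) {I : Fin k → Fin n} (hI : ¬Function.Injective I)
    (J : Fin k → Fin n) : alt u I J = 0 := by
  have key : alt u I J
      = ∑ π : Equiv.Perm (Fin k), sgn π *
          (fun X => ∑ π' : Equiv.Perm (Fin k), sgn π' * u X (J ∘ ⇑π')) (I ∘ ⇑π) := by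
    refine Finset.sum_congr rfl fun π _ => ?_
    simp only
    rw [Finset.mul_sum]
    refine Finset.sum_congr rfl fun π' _ => ?_
    push_cast [sgn]
    ring
  rw [key]
  exact sum_sgn_vanish hI (fun X => ∑ π' : Equiv.Perm (Fin k), sgn π' * u X (J ∘ ⇑π'))

lemma alt_not_inj_right (u : PQForm n k k) (I : Fin k → Fin n) {J : Fin k → Fin n}
    (hJ : ¬Function.Injective J) : alt u I J = 0 := by
  have key : alt u I J
      = ∑ π' : Equiv.Perm (Fin k), sgn π' *
          (fun X => ∑ π : Equiv.Perm (Fin k), sgn π * u (I ∘ ⇑π) X) (J ∘ ⇑π') := by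
    rw [alt, Finset.sum_comm]
    refine Finset.sum_congr rfl fun π' _ => ?_
    simp only
    rw [Finset.mul_sum]
    refine Finset.sum_congr rfl fun π _ => ?_
    push_cast [sgn]
    ring
  rw [key]
  exact sum_sgn_vanish hJ (fun X => ∑ π : Equiv.Perm (Fin k), sgn π * u (I ∘ ⇑π) X)

lemma altW_not_inj {w : (Fin m → Fin n) → ℂ} {J : Fin m → Fin n}
    (hJ : ¬Function.Injective J) : altW w J = 0 :=
  sum_sgn_vanish hJ w

lemma altW_altW (w : (Fin m → Fin n) → ℂ) (J : Fin m → Fin n) :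
    altW (altW w) J = (m.factorial : ℂ) * altW w J := by
  have step : ∀ ρ : Equiv.Perm (Fin m), sgn ρ * altW w (J ∘ ⇑ρ) = altW w J := by
    intro ρ
    rw [altW, altW, Finset.mul_sum]
    refine Fintype.sum_equiv (Equiv.mulLeft ρ) _ _ fun ρ' => ?_
    have harg : (J ∘ ⇑ρ) ∘ ⇑ρ' = J ∘ ⇑(ρ * ρ') := by
      funext x; simp [Equiv.Perm.mul_apply]
    simp only [Equiv.coe_mulLeft, sgn_mul, harg]
    ring
  rw [altW]
  calc ∑ ρ : Equiv.Perm (Fin m), sgn ρ * altW w (J ∘ ⇑ρ)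
      = ∑ _ρ : Equiv.Perm (Fin m), altW w J := Finset.sum_congr rfl fun ρ _ => step ρ
    _ = (m.factorial : ℂ) * altW w J := by
      simp [Finset.sum_const, Fintype.card_perm]

/-- Evaluating the pairing on indicator arguments recovers `alt u`. -/
lemma Sfun_ind_ind (hk : k + m = n) (u : PQForm n k k) (σ₀ τ₀ : Equiv.Perm (Fin n)) :
    Sfun hk u (ind (⇑σ₀ ∘ rIdx hk)) (ind (⇑τ₀ ∘ rIdx hk))
      = sgn σ₀ * sgn τ₀ * alt u (⇑σ₀ ∘ lIdx hk) (⇑τ₀ ∘ lIdx hk) := by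
  classical
  have step1 : Sfun hk u (ind (⇑σ₀ ∘ rIdx hk)) (ind (⇑τ₀ ∘ rIdx hk))
      = ∑ σ : Equiv.Perm (Fin n),
          (if ⇑σ ∘ rIdx hk = ⇑σ₀ ∘ rIdx hk then
            (∑ τ : Equiv.Perm (Fin n), (if ⇑τ ∘ rIdx hk = ⇑τ₀ ∘ rIdx hk then
              sgn σ * sgn τ * u (⇑σ ∘ lIdx hk) (⇑τ ∘ lIdx hk) else 0)) else 0) := by
    refine Finset.sum_congr rfl fun σ _ => ?_
    by_cases hσ : ⇑σ ∘ rIdx hk = ⇑σ₀ ∘ rIdx hk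
    · rw [if_pos hσ]
      refine Finset.sum_congr rfl fun τ _ => ?_
      by_cases hτ : ⇑τ ∘ rIdx hk = ⇑τ₀ ∘ rIdx hk
      · rw [if_pos hτ]
        simp only [ind, if_pos hσ, if_pos hτ, map_one]
        ring
      · rw [if_neg hτ]
        simp only [ind, if_neg hτ, map_zero]
        ring
    · rw [if_neg hσ]
      rw [← Finset.sum_const_zero (s := (Finset.univ : Finset (Equiv.Perm (Fin n))))]
      refine Finset.sum_congr rfl fun τ _ => ?_
      simp only [ind, if_neg hσ]
      ring
  rw [step1, sum_stab_r hk σ₀]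
  have step2 : ∀ π : Equiv.Perm (Fin k),
      (∑ τ : Equiv.Perm (Fin n), (if ⇑τ ∘ rIdx hk = ⇑τ₀ ∘ rIdx hk then
          sgn (σ₀ * blk hk π 1) * sgn τ *
            u (⇑(σ₀ * blk hk π 1) ∘ lIdx hk) (⇑τ ∘ lIdx hk) else 0))
      = ∑ π' : Equiv.Perm (Fin k),
          sgn (σ₀ * blk hk π 1) * sgn (τ₀ * blk hk π' 1) *
            u (⇑(σ₀ * blk hk π 1) ∘ lIdx hk) (⇑(τ₀ * blk hk π' 1) ∘ lIdx hk) :=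
    fun π => sum_stab_r hk τ₀ _
  rw [Finset.sum_congr rfl fun π _ => step2 π]
  have step3 : ∀ (π π' : Equiv.Perm (Fin k)),
      sgn (σ₀ * blk hk π 1) * sgn (τ₀ * blk hk π' 1) *
        u (⇑(σ₀ * blk hk π 1) ∘ lIdx hk) (⇑(τ₀ * blk hk π' 1) ∘ lIdx hk)
      = sgn σ₀ * sgn τ₀ * (sgn π * sgn π' *
          u ((⇑σ₀ ∘ lIdx hk) ∘ ⇑π) ((⇑τ₀ ∘ lIdx hk) ∘ ⇑π')) := by
    intro π π'
    rw [sgn_mul, sgn_mul, sgn_blk, sgn_blk, sgn_one, mul_blk_comp_l, mul_blk_comp_l]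
    have e1 : ⇑σ₀ ∘ lIdx hk ∘ ⇑π = (⇑σ₀ ∘ lIdx hk) ∘ ⇑π := rfl
    have e2 : ⇑τ₀ ∘ lIdx hk ∘ ⇑π' = (⇑τ₀ ∘ lIdx hk) ∘ ⇑π' := rfl
    rw [e1, e2]
    ring
  rw [Finset.sum_congr rfl fun π _ => Finset.sum_congr rfl fun π' _ => step3 π π']
  rw [alt, Finset.mul_sum]
  refine Finset.sum_congr rfl fun π _ => ?_
  rw [Finset.mul_sum]
  refine Finset.sum_congr rfl fun π' _ => ?_
  push_cast [sgn]
  ring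

/-- `Sfun` determines `alt`. -/
lemma alt_eq_of_Sfun_eq (hk : k + m = n) {u u' : PQForm n k k}
    (H : ∀ w v, Sfun hk u w v = Sfun hk u' w v) : alt u = alt u' := by
  classical
  funext I J
  by_cases hI : Function.Injective I
  · by_cases hJ : Function.Injective J
    · obtain ⟨σ₀, hσ₀⟩ := exists_perm_comp (lIdx_injective hk) hI
      obtain ⟨τ₀, hτ₀⟩ := exists_perm_comp (lIdx_injective hk) hJ
      have h1 := Sfun_ind_ind hk u σ₀ τ₀
      have h2 := Sfun_ind_ind hk u' σ₀ τ₀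
      rw [H _ _, h2] at h1
      rw [hσ₀, hτ₀] at h1
      have := congrArg (fun z => sgn σ₀ * sgn τ₀ * z) h1.symm
      simpa [← mul_assoc, sgn_sq,
        mul_comm, mul_left_comm] using mul_left_cancel₀ (a := sgn σ₀ * sgn τ₀) (by
          intro hcon
          have h3 : sgn σ₀ * sgn τ₀ * (sgn σ₀ * sgn τ₀) = 0 := by rw [hcon]; ring
          rw [mul_mul_mul_comm, sgn_sq, sgn_sq, mul_one] at h3
          exact one_ne_zero h3) h1.symm
    · rw [alt_not_inj_right u I hJ, alt_not_inj_right u' I hJ]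
  · rw [alt_not_inj_left u hI J, alt_not_inj_left u' hI J]

/-- Bilinear expansion of `Sfun` over indicators. -/
lemma Sfun_expand (hk : k + m = n) (u : PQForm n k k) (w v : (Fin m → Fin n) → ℂ) :
    Sfun hk u w v = ∑ b : Fin m → Fin n, ∑ a : Fin m → Fin n,
      w b * (starRingEnd ℂ) (v a) * Sfun hk u (ind b) (ind a) := by
  classical
  have rhs : ∑ b : Fin m → Fin n, ∑ a : Fin m → Fin n,
      w b * (starRingEnd ℂ) (v a) * Sfun hk u (ind b) (ind a)
      = ∑ b : Fin m → Fin n, ∑ a : Fin m → Fin n,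
          ∑ σ : Equiv.Perm (Fin n), ∑ τ : Equiv.Perm (Fin n),
          (if ⇑σ ∘ rIdx hk = b then (if ⇑τ ∘ rIdx hk = a then
            w b * (starRingEnd ℂ) (v a) * (sgn σ * sgn τ *
              u (⇑σ ∘ lIdx hk) (⇑τ ∘ lIdx hk)) else 0) else 0) := by
    refine Finset.sum_congr rfl fun b _ => Finset.sum_congr rfl fun a _ => ?_
    rw [Sfun, Finset.mul_sum]
    refine Finset.sum_congr rfl fun σ _ => ?_
    rw [Finset.mul_sum]
    refine Finset.sum_congr rfl fun τ _ => ?_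
    simp only [ind]
    by_cases h1 : ⇑σ ∘ rIdx hk = b <;> by_cases h2 : ⇑τ ∘ rIdx hk = a <;>
      simp [h1, h2] <;> ring
  rw [rhs, sum4_comm]
  refine Finset.sum_congr rfl fun σ _ => Finset.sum_congr rfl fun τ _ => ?_
  rw [eq_comm]
  simp only [Finset.sum_ite_irrel, Finset.sum_const_zero, Finset.sum_ite_eq,
    Finset.mem_univ, if_true]
  ring

lemma Sfun_sum_u {S : Type*} [Fintype S] (hk : k + m = n) (us : S → PQForm n k k)
    (w v : (Fin m → Fin n) → ℂ) :
    Sfun hk (∑ s, us s) w v = ∑ s, Sfun hk (us s) w v := by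
  classical
  have lhs : Sfun hk (∑ s, us s) w v
      = ∑ σ : Equiv.Perm (Fin n), ∑ τ : Equiv.Perm (Fin n), ∑ s : S,
          sgn σ * sgn τ * us s (⇑σ ∘ lIdx hk) (⇑τ ∘ lIdx hk) * w (⇑σ ∘ rIdx hk) *
            (starRingEnd ℂ) (v (⇑τ ∘ rIdx hk)) := by
    refine Finset.sum_congr rfl fun σ _ => Finset.sum_congr rfl fun τ _ => ?_
    rw [Finset.sum_apply, Finset.sum_apply, Finset.mul_sum, Finset.sum_mul, Finset.sum_mul]
  rw [lhs]
  exact ((Finset.sum_congr rfl fun σ _ => Finset.sum_comm).trans Finset.sum_comm).trans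
    (Finset.sum_congr rfl fun s _ => rfl)

lemma fin_argA (hk : k + (n - k) = n) (h1 : k + (n - k) + 0 = n) (σ : Fin n → Fin n) :
    (fun i : Fin k => σ (Fin.cast h1 (Fin.castAdd 0 (Fin.castAdd (n - k) i)))) = σ ∘ lIdx hk := by
  funext i
  rfl

lemma fin_argB (hk : k + (n - k) = n) (h2 : k + 0 + (n - k) = n) (τ : Fin n → Fin n) :
    (fun j : Fin k => τ (Fin.cast h2 (Fin.castAdd (n - k) (Fin.castAdd 0 j)))) = τ ∘ lIdx hk := by
  funext j
  rfl

lemma fin_argC (hk : k + (n - k) = n) (h1 : k + (n - k) + 0 = n) (σ : Fin n → Fin n) :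
    (fun i : Fin (n - k) => σ (Fin.cast h1 (Fin.castAdd 0 (Fin.natAdd k i)))) = σ ∘ rIdx hk := by
  funext i
  rfl

lemma fin_argE (hk : k + (n - k) = n) (h2 : k + 0 + (n - k) = n) (τ : Fin n → Fin n) :
    (fun i : Fin (n - k) => τ (Fin.cast h2 (Fin.natAdd (k + 0) i))) = τ ∘ rIdx hk := by
  funext i
  rfl

lemma beta0 {p : ℕ} (β : PQForm n p 0) (X : Fin p → Fin n) (g : Fin 0 → Fin n) :
    β X g = β X (fun x => x.elim0) :=
  congrArg (β X) (funext fun x => x.elim0)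

/-- Bridge: `volCoeff (pairing h u β)` in terms of `Sfun`. -/
lemma volCoeff_pairing (h : k ≤ n) (hk : k + (n - k) = n) (u : PQForm n k k)
    (β : PQForm n (n - k) 0) :
    volCoeff (pairing h u β) = Complex.I ^ ((n - k) ^ 2) * (-1 : ℂ) ^ (k * (n - k)) *
      Sfun hk u (fun J => β J (fun x => x.elim0)) (fun J => β J (fun x => x.elim0)) := by
  have step : ∀ σ τ : Equiv.Perm (Fin n),
      pairing h u β (id ∘ ⇑σ) (id ∘ ⇑τ)
        = Complex.I ^ ((n - k) ^ 2) * (-1 : ℂ) ^ (k * (n - k)) *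
            (u (⇑σ ∘ lIdx hk) (⇑τ ∘ lIdx hk) * β (⇑σ ∘ rIdx hk) (fun x => x.elim0) *
              (starRingEnd ℂ) (β (⇑τ ∘ rIdx hk) (fun x => x.elim0))) := by
    intro σ τ
    simp only [pairing, castD, wedge, conjForm, Pi.smul_apply, smul_eq_mul,
      Function.comp_apply, id_eq, Nat.mul_zero, Nat.zero_mul, pow_zero,
      one_mul, mul_one]
    rw [fin_argA hk _ ⇑σ, fin_argB hk _ ⇑τ, fin_argC hk _ ⇑σ, fin_argE hk _ ⇑τ,
      beta0 β (⇑σ ∘ rIdx hk), beta0 β (⇑τ ∘ rIdx hk)]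
    ring
  rw [volCoeff, alt]
  calc
    _ = ∑ σ : Equiv.Perm (Fin n), ∑ τ : Equiv.Perm (Fin n),
        Complex.I ^ ((n - k) ^ 2) * (-1 : ℂ) ^ (k * (n - k)) *
          (sgn σ * sgn τ * u (⇑σ ∘ lIdx hk) (⇑τ ∘ lIdx hk) *
            β (⇑σ ∘ rIdx hk) (fun x => x.elim0) *
            (starRingEnd ℂ) (β (⇑τ ∘ rIdx hk) (fun x => x.elim0))) := by
      refine Finset.sum_congr rfl fun σ _ => Finset.sum_congr rfl fun τ _ => ?_
      rw [step σ τ]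
      push_cast [sgn]
      ring
    _ = _ := by
      simp only [← Finset.mul_sum]
      rfl

/-- Value of the statement's square form `i^{k²} α ∧ ᾱ`. -/
lemma G_apply (α : PQForm n k 0) (I J : Fin k → Fin n) :
    castD (Nat.add_zero k) (Nat.zero_add k)
        ((Complex.I ^ (k ^ 2)) • (α.wedge (conjForm α))) I J
      = Complex.I ^ (k ^ 2) *
          (α I (fun x => x.elim0) * (starRingEnd ℂ) (α J (fun x => x.elim0))) := by
  simp only [castD, wedge, conjForm, Pi.smul_apply, smul_eq_mul,
    Nat.mul_zero, Nat.zero_mul, pow_zero, one_mul, mul_one]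
  have e1 : (fun i : Fin k => I (Fin.cast (Nat.add_zero k) (Fin.castAdd 0 i))) = I := by
    funext i; rfl
  have e2 : (fun j : Fin k => J (Fin.cast (Nat.zero_add k) (Fin.natAdd 0 j))) = J := by
    funext j
    congr 1
    apply Fin.ext
    simp
  rw [e1, e2, beta0 α I, beta0 α J]

/-- `Sfun` of a square form factorizes through `Mfun`. -/
lemma Sfun_G (hk : k + m = n) (α : PQForm n k 0) (w v : (Fin m → Fin n) → ℂ) :
    Sfun hk (castD (Nat.add_zero k) (Nat.zero_add k)
        ((Complex.I ^ (k ^ 2)) • (α.wedge (conjForm α)))) w v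
      = Complex.I ^ (k ^ 2) * (Mfun hk (fun I => α I (fun x => x.elim0)) w *
          (starRingEnd ℂ) (Mfun hk (fun I => α I (fun x => x.elim0)) v)) := by
  calc
    Sfun hk _ w v
        = ∑ σ : Equiv.Perm (Fin n), ∑ τ : Equiv.Perm (Fin n),
            Complex.I ^ (k ^ 2) *
            ((sgn σ * α (⇑σ ∘ lIdx hk) (fun x => x.elim0) * w (⇑σ ∘ rIdx hk)) *
              (starRingEnd ℂ) (sgn τ * α (⇑τ ∘ lIdx hk) (fun x => x.elim0) * v (⇑τ ∘ rIdx hk))) := by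
      refine Finset.sum_congr rfl fun σ _ => Finset.sum_congr rfl fun τ _ => ?_
      rw [G_apply]
      simp only [map_mul, conj_sgn]
      ring
    _ = Complex.I ^ (k ^ 2) *
          ((∑ σ : Equiv.Perm (Fin n),
            sgn σ * α (⇑σ ∘ lIdx hk) (fun x => x.elim0) * w (⇑σ ∘ rIdx hk)) *
           (∑ τ : Equiv.Perm (Fin n), (starRingEnd ℂ)
            (sgn τ * α (⇑τ ∘ lIdx hk) (fun x => x.elim0) * v (⇑τ ∘ rIdx hk)))) := by
      rw [Finset.sum_mul_sum]
      simp only [← Finset.mul_sum]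
    _ = _ := by
      rw [← map_sum]
      rfl

lemma Sfun_zero_of_altW_zero (hk : k + m = n) (u : PQForm n k k)
    {w : (Fin m → Fin n) → ℂ} (hw : altW w = 0) (v : (Fin m → Fin n) → ℂ) :
    Sfun hk u w v = 0 := by
  have h1 := sfun_altW hk u w v
  rw [hw] at h1
  simp only [Pi.zero_apply, mul_zero, zero_mul, Finset.sum_const_zero] at h1
  exact (mul_eq_zero.mp h1.symm).resolve_left
    (Nat.cast_ne_zero.mpr m.factorial_ne_zero)

lemma Mfun_zero (hk : k + m = n) (w : (Fin m → Fin n) → ℂ) :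
    Mfun hk (fun _ => 0) w = 0 := by
  simp [Mfun]

lemma Mfun_smul (hk : k + m = n) (C : ℂ) (g : (Fin k → Fin n) → ℂ)
    (w : (Fin m → Fin n) → ℂ) :
    Mfun hk (fun I => C * g I) w = C * Mfun hk g w := by
  rw [Mfun, Mfun, Finset.mul_sum]
  exact Finset.sum_congr rfl fun σ _ => by ring

lemma Mfun_sum {S : Type*} [Fintype S] (hk : k + m = n)
    (f : S → (Fin k → Fin n) → ℂ) (w : (Fin m → Fin n) → ℂ) :
    Mfun hk (fun I => ∑ b, f b I) w = ∑ b, Mfun hk (f b) w := by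
  have : Mfun hk (fun I => ∑ b, f b I) w
      = ∑ σ : Equiv.Perm (Fin n), ∑ b : S, sgn σ * f b (⇑σ ∘ lIdx hk) * w (⇑σ ∘ rIdx hk) := by
    refine Finset.sum_congr rfl fun σ _ => ?_
    rw [Finset.mul_sum, Finset.sum_mul]
  rw [this, Finset.sum_comm]
  rfl

lemma altW_combo_zero (w : (Fin m → Fin n) → ℂ) :
    altW (fun J => altW w J - (m.factorial : ℂ) * w J) = 0 := by
  funext J
  have h1 : altW (fun J' => altW w J' - (m.factorial : ℂ) * w J') J
      = altW (altW w) J - (m.factorial : ℂ) * altW w J := by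
    rw [altW, altW, altW, Finset.mul_sum, ← Finset.sum_sub_distrib]
    refine Finset.sum_congr rfl fun ρ _ => ?_
    ring
  rw [h1, altW_altW]
  simp

open Matrix ComplexOrder in
/-- From pointwise nonnegativity of the quadratic form, a sum-of-squares decomposition. -/
lemma forward_main (hk : k + m = n) (u : PQForm n k k)
    (key : ∀ w : (Fin m → Fin n) → ℂ, ∃ t : ℝ, 0 ≤ t ∧
        Sfun hk u w w = (t : ℂ) * Complex.I ^ (k ^ 2)) :
    ∃ c : (Fin m → Fin n) → ((Fin k → Fin n) → ℂ), ∀ w v,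
      Sfun hk u w v = Complex.I ^ (k ^ 2) *
        ∑ s : Fin m → Fin n, Mfun hk (c s) w * (starRingEnd ℂ) (Mfun hk (c s) v) := by
  classical
  have hIk : (Complex.I ^ (k ^ 2)) ≠ 0 := pow_ne_zero _ Complex.I_ne_zero
  let H : Matrix (Fin m → Fin n) (Fin m → Fin n) ℂ :=
    fun a b => (Complex.I ^ (k ^ 2))⁻¹ * Sfun hk u (ind b) (ind a)
  have hHab : ∀ a b, H a b = (Complex.I ^ (k ^ 2))⁻¹ * Sfun hk u (ind b) (ind a) :=
    fun a b => rfl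
  -- sesquilinear expansion
  have expand : ∀ w v, Sfun hk u w v
      = Complex.I ^ (k ^ 2) * ∑ a, ∑ b, (starRingEnd ℂ) (v a) * H a b * w b := by
    intro w v
    rw [Sfun_expand hk u w v, Finset.sum_comm]
    calc
      ∑ a, ∑ b, w b * (starRingEnd ℂ) (v a) * Sfun hk u (ind b) (ind a)
          = ∑ a, ∑ b, Complex.I ^ (k ^ 2) * ((starRingEnd ℂ) (v a) * H a b * w b) := by
        refine Finset.sum_congr rfl fun a _ => Finset.sum_congr rfl fun b _ => ?_
        rw [hHab a b]
        field_simp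
      _ = _ := by
        simp only [← Finset.mul_sum]
  have qreal : ∀ x : (Fin m → Fin n) → ℂ, ∃ t : ℝ, 0 ≤ t ∧
      (∑ a, ∑ b, (starRingEnd ℂ) (x a) * H a b * x b) = (t : ℂ) := by
    intro x
    obtain ⟨t, ht0, hts⟩ := key x
    refine ⟨t, ht0, ?_⟩
    have h2 := expand x x
    rw [hts] at h2
    have h3 : Complex.I ^ (k ^ 2) * (t : ℂ)
        = Complex.I ^ (k ^ 2) * ∑ a, ∑ b, (starRingEnd ℂ) (x a) * H a b * x b := by
      rw [← h2]; ring
    exact (mul_left_cancel₀ hIk h3).symm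
  -- the two dot-product shapes
  have hdot1 : ∀ x : (Fin m → Fin n) → ℂ,
      dotProduct (star x) (H *ᵥ x) = ∑ a, ∑ b, (starRingEnd ℂ) (x a) * H a b * x b := by
    intro x
    simp only [dotProduct, Matrix.mulVec, Pi.star_apply, Finset.mul_sum]
    refine Finset.sum_congr rfl fun a _ => Finset.sum_congr rfl fun b _ => ?_
    simp only [Complex.star_def]
    ring
  have hdot2 : ∀ x : (Fin m → Fin n) → ℂ,
      dotProduct (star (H *ᵥ x)) x
        = (starRingEnd ℂ) (∑ a, ∑ b, (starRingEnd ℂ) (x a) * H a b * x b) := by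
    intro x
    simp only [dotProduct, Matrix.mulVec, Pi.star_apply, map_sum,
      Complex.star_def, Finset.sum_mul]
    refine Finset.sum_congr rfl fun a _ => Finset.sum_congr rfl fun b _ => ?_
    simp only [_root_.map_mul, Complex.conj_conj]
    ring
  have herm : H.IsHermitian := by
    rw [Matrix.isHermitian_iff_isSymmetric]
    rw [LinearMap.isSymmetric_iff_inner_map_self_real]
    intro v
    have hv : (inner ℂ (Matrix.toEuclideanLin H v) v : ℂ)
        = dotProduct (star (H *ᵥ (WithLp.equiv 2 _ v))) (WithLp.equiv 2 _ v) := by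
      rw [EuclideanSpace.inner_eq_star_dotProduct, dotProduct_comm]; rfl
    obtain ⟨t, _, ht⟩ := qreal (WithLp.equiv 2 _ v)
    rw [hv, hdot2, ht]
    simp [Complex.conj_ofReal]
  have psd : H.PosSemidef := by
    refine Matrix.PosSemidef.of_dotProduct_mulVec_nonneg herm fun x => ?_
    obtain ⟨t, ht0, ht⟩ := qreal x
    rw [hdot1, ht]
    exact Complex.zero_le_real.mpr ht0
  obtain ⟨B, hB⟩ : ∃ B : Matrix (Fin m → Fin n) (Fin m → Fin n) ℂ, H = Bᴴ * B := by
    open MatrixOrder in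
    have hA : 0 ≤ H := psd.nonneg
    open MatrixOrder in
    obtain ⟨X, hX, -, hXeq⟩ := CFC.exists_sqrt_of_isSelfAdjoint_of_quasispectrumRestricts
      hA.posSemidef.isHermitian (QuasispectrumRestricts.nnreal_of_nonneg hA)
    refine ⟨X, ?_⟩
    rw [← hXeq]
    nth_rewrite 1 [← hX.star_eq]
    rfl
  have hHBB : ∀ a b, H a b = ∑ s, (starRingEnd ℂ) (B s a) * B s b := by
    intro a b
    rw [hB, Matrix.mul_apply]
    refine Finset.sum_congr rfl fun s _ => ?_
    rw [Matrix.conjTranspose_apply]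
    rfl
  -- the linear functionals
  set ℓ : (Fin m → Fin n) → ((Fin m → Fin n) → ℂ) → ℂ :=
    fun s w => ∑ b, B s b * w b with hℓ
  have fact1 : ∀ w v, Sfun hk u w v
      = Complex.I ^ (k ^ 2) * ∑ s, ℓ s w * (starRingEnd ℂ) (ℓ s v) := by
    intro w v
    rw [expand w v]
    congr 1
    calc
      ∑ a, ∑ b, (starRingEnd ℂ) (v a) * H a b * w b
          = ∑ a, ∑ b, ∑ s, ((starRingEnd ℂ) (B s a * v a)) * (B s b * w b) := by
        refine Finset.sum_congr rfl fun a _ => Finset.sum_congr rfl fun b _ => ?_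
        rw [hHBB a b, Finset.mul_sum, Finset.sum_mul]
        refine Finset.sum_congr rfl fun s _ => ?_
        simp only [_root_.map_mul]
        ring
      _ = ∑ s, ∑ a, ∑ b, ((starRingEnd ℂ) (B s a * v a)) * (B s b * w b) := by
        exact ((Finset.sum_congr rfl fun a _ => Finset.sum_comm).trans Finset.sum_comm)
      _ = ∑ s, ℓ s w * (starRingEnd ℂ) (ℓ s v) := by
        refine Finset.sum_congr rfl fun s _ => ?_
        rw [hℓ]
        simp only [map_sum, _root_.map_mul]
        rw [Finset.sum_mul_sum]
        rw [Finset.sum_comm]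
        refine Finset.sum_congr rfl fun a _ => Finset.sum_congr rfl fun b _ => ?_
        ring
  -- the functionals kill the kernel of altW
  have hker : ∀ w, altW w = 0 → ∀ s, ℓ s w = 0 := by
    intro w hw s
    have h0 : Sfun hk u w w = 0 := Sfun_zero_of_altW_zero hk u hw w
    rw [fact1 w w] at h0
    have h1 : ∑ s, ℓ s w * (starRingEnd ℂ) (ℓ s w) = 0 :=
      (mul_eq_zero.mp h0).resolve_left hIk
    have h2 : ∑ s, ((Complex.normSq (ℓ s w) : ℝ) : ℂ) = 0 := by
      rw [← h1]
      exact Finset.sum_congr rfl fun s _ => (Complex.mul_conj _).symm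
    have h3 : ∑ s, Complex.normSq (ℓ s w) = 0 := by
      exact_mod_cast h2
    have h4 := (Finset.sum_eq_zero_iff_of_nonneg
      (fun s _ => Complex.normSq_nonneg (ℓ s w))).mp h3 s (Finset.mem_univ s)
    exact Complex.normSq_eq_zero.mp h4
  -- ℓ is determined by altW
  have hfactor : ∀ s w, ℓ s w = ((m.factorial : ℂ))⁻¹ * ℓ s (altW w) := by
    intro s w
    have hm0 : (m.factorial : ℂ) ≠ 0 := Nat.cast_ne_zero.mpr m.factorial_ne_zero
    have hz := hker _ (altW_combo_zero w) s
    have hlin : ℓ s (fun J => altW w J - (m.factorial : ℂ) * w J)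
        = ℓ s (altW w) - (m.factorial : ℂ) * ℓ s w := by
      rw [hℓ]
      simp only [Finset.mul_sum, ← Finset.sum_sub_distrib]
      refine Finset.sum_congr rfl fun b _ => ?_
      ring
    rw [hlin] at hz
    field_simp
    linear_combination (-1 : ℂ) * hz
  -- the permutation choices
  have hσof : ∀ b : Fin m → Fin n, Function.Injective b →
      ∃ σ₀ : Equiv.Perm (Fin n), ⇑σ₀ ∘ rIdx hk = b :=
    fun b hb => exists_perm_comp (rIdx_injective hk) hb
  let σof : (Fin m → Fin n) → Equiv.Perm (Fin n) :=
    fun b => if hb : Function.Injective b then Classical.choose (hσof b hb) else 1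
  have hσof' : ∀ b (hb : Function.Injective b), ⇑(σof b) ∘ rIdx hk = b := by
    intro b hb
    simp only [σof, dif_pos hb]
    exact Classical.choose_spec (hσof b hb)
  -- the witnesses
  refine ⟨fun s I => ((m.factorial : ℂ))⁻¹ * ∑ b, (if Function.Injective b then
      B s b * sgn (σof b) * ind (⇑(σof b) ∘ lIdx hk) I else 0), fun w v => ?_⟩
  have hMc : ∀ s w', Mfun hk (fun I => ((m.factorial : ℂ))⁻¹ * ∑ b,
      (if Function.Injective b then
        B s b * sgn (σof b) * ind (⇑(σof b) ∘ lIdx hk) I else 0)) w' = ℓ s w' := by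
    intro s w'
    rw [Mfun_smul, Mfun_sum]
    have hterm : ∀ b : Fin m → Fin n,
        Mfun hk (fun I => if Function.Injective b then
          B s b * sgn (σof b) * ind (⇑(σof b) ∘ lIdx hk) I else 0) w'
        = B s b * altW w' b := by
      intro b
      by_cases hb : Function.Injective b
      · have e1 : (fun I => if Function.Injective b then
            B s b * sgn (σof b) * ind (⇑(σof b) ∘ lIdx hk) I else 0)
            = fun I => (B s b * sgn (σof b)) * ind (⇑(σof b) ∘ lIdx hk) I := by
          funext I
          rw [if_pos hb]
        rw [e1, Mfun_smul, Mfun_ind]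
        rw [hσof' b hb]
        have := sgn_sq (σof b)
        linear_combination (B s b * altW w' b) * this
      · have e1 : (fun I => if Function.Injective b then
            B s b * sgn (σof b) * ind (⇑(σof b) ∘ lIdx hk) I else 0)
            = fun _ => (0 : ℂ) := by
          funext I
          rw [if_neg hb]
        rw [e1, Mfun_zero, altW_not_inj hb, mul_zero]
    rw [Finset.sum_congr rfl fun b _ => hterm b]
    rw [hfactor s w', hℓ]
  rw [fact1 w v]
  congr 1
  refine Finset.sum_congr rfl fun s _ => ?_
  rw [hMc s w, hMc s v]

lemma pow_identity (hk : k + m = n) :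
    Complex.I ^ (n ^ 2) = Complex.I ^ (m ^ 2) * (-1 : ℂ) ^ (k * m) * Complex.I ^ (k ^ 2) := by
  subst hk
  rw [show ((-1 : ℂ)) = Complex.I ^ 2 by rw [Complex.I_sq], ← pow_mul, ← pow_add, ← pow_add]
  congr 1
  ring

end SoS

/-- a real `(k,k)`-form `u` on `ℂⁿ` is non-negative iff it can be written
(as a form) as `u = ∑_{s=1}^N (√-1)^{k²} α_s ∧ ᾱ_s` for some `(k,0)`-forms `α_s`. -/
theorem isNonnegForm_iff_sum_squares {n k : ℕ} (h : k ≤ n) (u : PQForm n k k)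
    (hreal : PQForm.IsRealForm u) :
    PQForm.IsNonnegForm h u ↔
      ∃ (N : ℕ) (α : Fin N → PQForm n k 0),
        PQForm.alt u = PQForm.alt (∑ s, PQForm.castD (Nat.add_zero k) (Nat.zero_add k)
          ((Complex.I ^ (k ^ 2)) • ((α s).wedge (PQForm.conjForm (α s))))) := by
  classical
  have hk : k + (n - k) = n := Nat.add_sub_cancel' h
  have hC : Complex.I ^ ((n - k) ^ 2) * (-1 : ℂ) ^ (k * (n - k)) ≠ 0 :=
    mul_ne_zero (pow_ne_zero _ Complex.I_ne_zero)
      (pow_ne_zero _ (by norm_num : (-1 : ℂ) ≠ 0))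
  constructor
  · intro hnn
    have key : ∀ w : (Fin (n - k) → Fin n) → ℂ, ∃ t : ℝ, 0 ≤ t ∧
        SoS.Sfun hk u w w = (t : ℂ) * Complex.I ^ (k ^ 2) := by
      intro w
      obtain ⟨t, ht0, htv⟩ := hnn (fun J _ => w J)
      rw [SoS.volCoeff_pairing h hk u] at htv
      refine ⟨t, ht0, ?_⟩
      apply mul_left_cancel₀ hC
      calc
        Complex.I ^ ((n - k) ^ 2) * (-1 : ℂ) ^ (k * (n - k)) * SoS.Sfun hk u w w
            = (t : ℂ) * Complex.I ^ (n ^ 2) := htv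
        _ = Complex.I ^ ((n - k) ^ 2) * (-1 : ℂ) ^ (k * (n - k)) *
              ((t : ℂ) * Complex.I ^ (k ^ 2)) := by
          rw [SoS.pow_identity hk]
          ring
    obtain ⟨c, hc⟩ := SoS.forward_main hk u key
    refine ⟨Fintype.card (Fin (n - k) → Fin n),
      fun s I _ => c ((Fintype.equivFin (Fin (n - k) → Fin n)).symm s) I, ?_⟩
    apply SoS.alt_eq_of_Sfun_eq hk
    intro w v
    set e := (Fintype.equivFin (Fin (n - k) → Fin n)).symm
    calc
      SoS.Sfun hk u w v
          = Complex.I ^ (k ^ 2) * ∑ s : Fin (n - k) → Fin n,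
              SoS.Mfun hk (c s) w * (starRingEnd ℂ) (SoS.Mfun hk (c s) v) := hc w v
      _ = ∑ s : Fin (n - k) → Fin n, Complex.I ^ (k ^ 2) *
            (SoS.Mfun hk (c s) w * (starRingEnd ℂ) (SoS.Mfun hk (c s) v)) := by
        rw [Finset.mul_sum]
      _ = ∑ s : Fin (Fintype.card (Fin (n - k) → Fin n)), Complex.I ^ (k ^ 2) *
            (SoS.Mfun hk (c (e s)) w * (starRingEnd ℂ) (SoS.Mfun hk (c (e s)) v)) :=
        (Fintype.sum_equiv e _ _ fun s => rfl).symm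
      _ = ∑ s : Fin (Fintype.card (Fin (n - k) → Fin n)),
            SoS.Sfun hk (PQForm.castD (Nat.add_zero k) (Nat.zero_add k)
              ((Complex.I ^ (k ^ 2)) • (PQForm.wedge (fun I (_ : Fin 0 → Fin n) => c (e s) I)
                (PQForm.conjForm (fun I (_ : Fin 0 → Fin n) => c (e s) I))))) w v := by
        refine Finset.sum_congr rfl fun s _ => ?_
        rw [SoS.Sfun_G hk]
      _ = _ := (SoS.Sfun_sum_u hk
          (fun s => PQForm.castD (Nat.add_zero k) (Nat.zero_add k)
            ((Complex.I ^ (k ^ 2)) • (PQForm.wedge (fun I (_ : Fin 0 → Fin n) => c (e s) I)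
              (PQForm.conjForm (fun I (_ : Fin 0 → Fin n) => c (e s) I))))) w v).symm
  · rintro ⟨N, α, hα⟩ β
    set w : (Fin (n - k) → Fin n) → ℂ := fun J => β J (fun x => x.elim0) with hw
    refine ⟨∑ s : Fin N, Complex.normSq
      (SoS.Mfun hk (fun I => α s I (fun x => x.elim0)) w),
      Finset.sum_nonneg fun s _ => Complex.normSq_nonneg _, ?_⟩
    rw [SoS.volCoeff_pairing h hk u β, SoS.Sfun_eq_of_alt_eq hk hα]
    rw [SoS.Sfun_sum_u hk]
    calc
      Complex.I ^ ((n - k) ^ 2) * (-1 : ℂ) ^ (k * (n - k)) *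
          ∑ s : Fin N, SoS.Sfun hk (PQForm.castD (Nat.add_zero k) (Nat.zero_add k)
            ((Complex.I ^ (k ^ 2)) • ((α s).wedge (PQForm.conjForm (α s))))) w w
          = Complex.I ^ ((n - k) ^ 2) * (-1 : ℂ) ^ (k * (n - k)) *
              ∑ s : Fin N, Complex.I ^ (k ^ 2) *
                (((Complex.normSq (SoS.Mfun hk (fun I => α s I (fun x => x.elim0)) w) : ℝ)) : ℂ) := by
        congr 1
        refine Finset.sum_congr rfl fun s _ => ?_
        rw [SoS.Sfun_G hk, Complex.mul_conj]
      _ = (((∑ s : Fin N, Complex.normSq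
            (SoS.Mfun hk (fun I => α s I (fun x => x.elim0)) w) : ℝ)) : ℂ) *
            Complex.I ^ (n ^ 2) := by
        rw [SoS.pow_identity hk, ← Finset.mul_sum]
        push_cast
        ring
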